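/- arXiv:2010.14941 — 2 statements merged into one kernel-verified Lean document; each statement's English description precedes it below -/
import Mathlib

section
/- For every integer n ≥ 0, the sum over monic polynomials f of degree n in A of the ordinary divisor function evaluated at f² is given exactly by: ∑_{f monic, deg f = n} d_2(f²) = (1 + (1/2)(3 + q^{−1})·n + (1/2)(1 − q^{−1})·n²) · q^n. -/
open Polynomial
open scoped Classical

noncomputable section

variable (F : Type) [Field F] [Fintype F]

/-- The set of monic irreducible polynomials of degree `n` over `F`. -/
def primesDeg (n : ℕ) : Set (Polynomial F) :=
  {P | P.Monic ∧ Irreducible P ∧ P.natDegree = n}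

/-- The norm `|f| = q ^ deg f` as a real number. -/
def pnorm (f : Polynomial F) : ℝ := (Fintype.card F : ℝ) ^ f.natDegree

/-- The quadratic character `χ_P` modulo a monic irreducible `P`. -/
def chiP (P f : Polynomial F) : ℝ :=
  if Ideal.Quotient.mk (Ideal.span {P}) f = 0 then 0
  else if IsSquare (Ideal.Quotient.mk (Ideal.span {P}) f) then 1 else -1

/-- `d_k(f)`: the number of ordered `k`-tuples of monic polynomials whose product is `f`. -/
def dk (k : ℕ) (f : Polynomial F) : ℕ :=
  Nat.card {t : Fin k → Polynomial F // (∀ i, (t i).Monic) ∧ ∏ i, t i = f}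

/-- `L(1, χ_P)`. -/
def L1 (P : Polynomial F) : ℝ :=
  ∑ m ∈ Finset.range P.natDegree,
    (Fintype.card F : ℝ) ^ (-(m : ℤ)) *
      ∑ᶠ f ∈ {f : Polynomial F | f.Monic ∧ f.natDegree = m}, chiP F P f

/-- The generalized divisor function `d_z` for complex `z`. -/
def dz (z : ℂ) (f : Polynomial F) : ℂ :=
  ∏ Q ∈ (UniqueFactorizationMonoid.normalizedFactors f).toFinset,
    (∏ j ∈ Finset.range ((UniqueFactorizationMonoid.normalizedFactors f).count Q), (z + (j : ℂ))) /
      ((Nat.factorial ((UniqueFactorizationMonoid.normalizedFactors f).count Q) : ℕ) : ℂ)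

/-! ### Auxiliary development for `sum_d2_sq` -/

/-- Monic polynomials of degree exactly `n`. -/
def auxMon (n : ℕ) : Set (Polynomial F) := {f | f.Monic ∧ f.natDegree = n}

/-- Monic degree-`n` polynomials are `X^n` plus a polynomial of degree `< n`. -/
def auxMonEquiv (n : ℕ) : auxMon F n ≃ degreeLT F n where
  toFun f := ⟨f.1 - X ^ n, by
    obtain ⟨f, hm, hd⟩ := f
    rw [mem_degreeLT]
    show (f - X ^ n).degree < (n : WithBot ℕ)
    rcases eq_or_ne f (X ^ n) with h | h
    · rw [h, sub_self, degree_zero]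
      exact WithBot.bot_lt_coe n
    · have h1 : f.degree = (X ^ n : Polynomial F).degree := by
        rw [degree_X_pow, degree_eq_natDegree hm.ne_zero, hd]
      have h2 := degree_sub_lt h1 hm.ne_zero
        (by rw [hm.leadingCoeff, (monic_X_pow n).leadingCoeff])
      rwa [degree_eq_natDegree hm.ne_zero, hd] at h2⟩
  invFun g := ⟨X ^ n + g.1, by
    have hlt : g.1.degree < (n : WithBot ℕ) := mem_degreeLT.mp g.2
    constructor
    · exact monic_X_pow_add hlt
    · have hdeg : (X ^ n + g.1).degree = (n : WithBot ℕ) := by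
        rw [degree_add_eq_left_of_degree_lt (by rwa [degree_X_pow]), degree_X_pow]
      exact natDegree_eq_of_degree_eq_some hdeg⟩
  left_inv f := Subtype.ext (by ring)
  right_inv g := Subtype.ext (by ring)

instance auxFinDegLT (n : ℕ) : Finite (degreeLT F n) :=
  Finite.of_equiv _ (degreeLTEquiv F n).toEquiv.symm

instance auxFinMon (n : ℕ) : Finite (auxMon F n) :=
  Finite.of_equiv _ (auxMonEquiv F n).symm

lemma auxMon_finite (n : ℕ) : (auxMon F n).Finite := Set.toFinite _

lemma card_auxMon (n : ℕ) : Nat.card (auxMon F n) = Fintype.card F ^ n := by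
  rw [Nat.card_congr (auxMonEquiv F n), Nat.card_congr (degreeLTEquiv F n).toEquiv]
  simp [Nat.card_eq_fintype_card]

/-- Monic polynomials of degree at most `N`. -/
def auxMLE (N : ℕ) : Set (Polynomial F) := {f | f.Monic ∧ f.natDegree ≤ N}

lemma auxMLE_finite (N : ℕ) : (auxMLE F N).Finite := by
  have h : auxMLE F N ⊆ ⋃ k ∈ Finset.range (N + 1), auxMon F k := by
    intro f hf
    exact Set.mem_iUnion₂.mpr ⟨f.natDegree,
      Finset.mem_range.mpr (Nat.lt_succ_of_le hf.2), ⟨hf.1, rfl⟩⟩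
  exact (Set.Finite.biUnion (Finset.range (N + 1)).finite_toSet
    fun k _ => auxMon_finite F k).subset h

/-- Pairs of monic polynomials with prescribed total degree. -/
def auxPair (m : ℕ) : Set (Polynomial F × Polynomial F) :=
  {x | x.1.Monic ∧ x.2.Monic ∧ x.1.natDegree + x.2.natDegree = m}

/-- Triples of monic polynomials with prescribed total degree. -/
def auxAll (n : ℕ) : Set (Polynomial F × Polynomial F × Polynomial F) :=
  {x | x.1.Monic ∧ x.2.1.Monic ∧ x.2.2.Monic ∧
    x.1.natDegree + x.2.1.natDegree + x.2.2.natDegree = n}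

/-- Triples `(d, s, t)` of monic polynomials with `s, t` coprime and total degree `n`. -/
def auxCo (n : ℕ) : Set (Polynomial F × Polynomial F × Polynomial F) :=
  {x | x.1.Monic ∧ x.2.1.Monic ∧ x.2.2.Monic ∧ gcd x.2.1 x.2.2 = 1 ∧
    x.1.natDegree + x.2.1.natDegree + x.2.2.natDegree = n}

/-- Triples `(f, a, b)` of monic polynomials with `deg f = n` and `a * b = f ^ 2`. -/
def auxSq (n : ℕ) : Set (Polynomial F × Polynomial F × Polynomial F) :=
  {x | x.1.Monic ∧ x.2.1.Monic ∧ x.2.2.Monic ∧ x.1.natDegree = n ∧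
    x.2.1 * x.2.2 = x.1 ^ 2}

lemma auxPair_finite (m : ℕ) : (auxPair F m).Finite := by
  refine ((auxMLE_finite F m).prod (auxMLE_finite F m)).subset ?_
  intro x hx
  obtain ⟨h1, h2, h3⟩ := hx
  exact ⟨⟨h1, by omega⟩, ⟨h2, by omega⟩⟩

lemma auxAll_finite (n : ℕ) : (auxAll F n).Finite := by
  refine ((auxMLE_finite F n).prod ((auxMLE_finite F n).prod (auxMLE_finite F n))).subset ?_
  intro x hx
  obtain ⟨h1, h2, h3, h4⟩ := hx
  exact ⟨⟨h1, by omega⟩, ⟨h2, by omega⟩, ⟨h3, by omega⟩⟩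

lemma auxCo_finite (n : ℕ) : (auxCo F n).Finite := by
  refine (auxAll_finite F n).subset ?_
  intro x hx
  obtain ⟨h1, h2, h3, _, h5⟩ := hx
  exact ⟨h1, h2, h3, h5⟩

lemma auxSq_finite (n : ℕ) : (auxSq F n).Finite := by
  refine ((auxMLE_finite F n).prod
    ((auxMLE_finite F (2 * n)).prod (auxMLE_finite F (2 * n)))).subset ?_
  intro x hx
  obtain ⟨h1, h2, h3, h4, h5⟩ := hx
  have hab : x.2.1.natDegree + x.2.2.natDegree = 2 * n := by
    have h6 := natDegree_mul h2.ne_zero h3.ne_zero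
    rw [h5, natDegree_pow, h4] at h6
    omega
  exact ⟨⟨h1, by omega⟩, ⟨h2, by omega⟩, ⟨h3, by omega⟩⟩

instance (m : ℕ) : Finite (auxPair F m) := (auxPair_finite F m).to_subtype
instance (n : ℕ) : Finite (auxAll F n) := (auxAll_finite F n).to_subtype
instance (n : ℕ) : Finite (auxCo F n) := (auxCo_finite F n).to_subtype
instance (n : ℕ) : Finite (auxSq F n) := (auxSq_finite F n).to_subtype

/-- The fiber of the divisor-counting problem. -/
def auxFib (g : Polynomial F) : Set (Polynomial F × Polynomial F) :=
  {p | p.1.Monic ∧ p.2.Monic ∧ p.1 * p.2 = g}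

lemma auxFib_finite (g : Polynomial F) (hg : g ≠ 0) : (auxFib F g).Finite := by
  refine ((auxMLE_finite F g.natDegree).prod (auxMLE_finite F g.natDegree)).subset ?_
  intro x hx
  obtain ⟨h1, h2, h3⟩ := hx
  exact ⟨⟨h1, natDegree_le_of_dvd (Dvd.intro _ h3) hg⟩,
    ⟨h2, natDegree_le_of_dvd (Dvd.intro_left _ h3) hg⟩⟩

lemma aux_dk_two (g : Polynomial F) : dk F 2 g = Nat.card (auxFib F g) := by
  apply Nat.card_congr
  refine Equiv.subtypeEquiv (piFinTwoEquiv fun _ => Polynomial F) fun t => ?_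
  simp only [piFinTwoEquiv, Equiv.coe_fn_mk, auxFib, Set.mem_setOf_eq,
    Fin.prod_univ_two, Fin.forall_fin_two, and_assoc]

lemma aux_card_sigma {ι : Type} [Fintype ι] (B : ι → Type) [∀ i, Finite (B i)] :
    Nat.card ((i : ι) × B i) = ∑ i, Nat.card (B i) := by
  letI : ∀ i, Fintype (B i) := fun i => Fintype.ofFinite _
  simp [Nat.card_eq_fintype_card, Fintype.card_sigma]

lemma aux_sum_eq (n : ℕ) :
    ∑ f ∈ (auxMon_finite F n).toFinset, dk F 2 (f ^ 2) = Nat.card (auxSq F n) := by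
  classical
  haveI : Fintype (auxMon F n) := Fintype.ofFinite _
  haveI : ∀ f : auxMon F n, Finite (auxFib F ((f : Polynomial F) ^ 2)) := fun f =>
    ((auxFib_finite F _ (pow_ne_zero 2 f.2.1.ne_zero)).to_subtype)
  have e : (Σ f : auxMon F n, auxFib F ((f : Polynomial F) ^ 2)) ≃ auxSq F n := by
    refine Equiv.ofBijective
      (fun x => ⟨(x.1.1, x.2.1.1, x.2.1.2),
        x.1.2.1, x.2.2.1, x.2.2.2.1, x.1.2.2, x.2.2.2.2⟩) ⟨?_, ?_⟩
    · rintro ⟨⟨f, hf⟩, ⟨⟨a, b⟩, hab⟩⟩ ⟨⟨f', hf'⟩, ⟨⟨a', b'⟩, hab'⟩⟩ h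
      simp only [Subtype.mk.injEq, Subtype.ext_iff, Prod.mk.injEq] at h
      obtain ⟨h1, h2, h3⟩ := h
      subst h1; subst h2; subst h3
      rfl
    · rintro ⟨⟨f, a, b⟩, hm, ha, hb, hd, he⟩
      exact ⟨⟨⟨f, hm, hd⟩, ⟨(a, b), ha, hb, he⟩⟩, rfl⟩
  calc ∑ f ∈ (auxMon_finite F n).toFinset, dk F 2 (f ^ 2)
      = ∑ f : auxMon F n, dk F 2 ((f : Polynomial F) ^ 2) :=
        Finset.sum_subtype _ (fun x => (auxMon_finite F n).mem_toFinset) _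
    _ = ∑ f : auxMon F n, Nat.card (auxFib F ((f : Polynomial F) ^ 2)) :=
        Finset.sum_congr rfl fun f _ => aux_dk_two F _
    _ = Nat.card (auxSq F n) := by rw [← aux_card_sigma]; exact Nat.card_congr e

lemma aux_two_ne_zero (hq : Odd (Fintype.card F)) : (2 : F) ≠ 0 := by
  intro h2
  have hd : ringChar F ∣ 2 := (ringChar.spec F 2).mp (by push_cast; exact h2)
  rcases (Nat.dvd_prime Nat.prime_two).mp hd with h | h
  · have h1 : ((1 : ℕ) : F) = 0 := (ringChar.spec F 1).mpr (by rw [h])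
    exact one_ne_zero (by exact_mod_cast h1)
  · have := (FiniteField.even_card_iff_char_two (F := F)).mp h
    rw [Nat.odd_iff] at hq
    omega

lemma aux_sqrt (h2 : (2 : F) ≠ 0) {s t : Polynomial F} (hs : s.Monic) (ht : t.Monic)
    (h : s ^ 2 = t ^ 2) : s = t := by
  rcases mul_eq_zero.mp (show (s - t) * (s + t) = 0 by linear_combination h) with h1 | h1
  · exact sub_eq_zero.mp h1
  · exfalso
    have hst : s = -t := eq_neg_of_add_eq_zero_left h1
    have hl : (-t).leadingCoeff = 1 := by rw [← hst]; exact hs.leadingCoeff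
    rw [leadingCoeff_neg, ht.leadingCoeff] at hl
    exact h2 (by linear_combination -hl)

lemma aux_gcd_pow {s t : Polynomial F} (h : gcd s t = 1) : gcd (s ^ 2) (t ^ 2) = 1 := by
  have hc : IsCoprime s t := (gcd_isUnit_iff s t).mp (by rw [h]; exact isUnit_one)
  have hu : IsUnit (gcd (s ^ 2) (t ^ 2)) := (gcd_isUnit_iff _ _).mpr (hc.pow)
  rw [← normalize_gcd]
  exact normalize_eq_one.mpr hu

lemma aux_card_sq (h2 : (2 : F) ≠ 0) (n : ℕ) :
    Nat.card (auxSq F n) = Nat.card (auxCo F n) := by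
  symm
  apply Nat.card_congr
  refine Equiv.ofBijective (fun x =>
    ⟨(x.1.1 * x.1.2.1 * x.1.2.2, x.1.1 * x.1.2.1 ^ 2, x.1.1 * x.1.2.2 ^ 2), ?_⟩) ⟨?_, ?_⟩
  · obtain ⟨⟨d, s, t⟩, hd, hs, ht, hco, hsum⟩ := x
    replace hd : d.Monic := hd
    replace hs : s.Monic := hs
    replace ht : t.Monic := ht
    replace hsum : d.natDegree + s.natDegree + t.natDegree = n := hsum
    refine ⟨(hd.mul hs).mul ht, hd.mul (hs.pow _), hd.mul (ht.pow _), ?_, by ring⟩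
    show (d * s * t).natDegree = n
    rw [natDegree_mul (mul_ne_zero hd.ne_zero hs.ne_zero) ht.ne_zero,
      natDegree_mul hd.ne_zero hs.ne_zero]
    exact hsum
  · rintro ⟨⟨d, s, t⟩, hd, hs, ht, hco, hsum⟩ ⟨⟨d', s', t'⟩, hd', hs', ht', hco', hsum'⟩ h
    replace hd : d.Monic := hd
    replace hd' : d'.Monic := hd'
    replace hs : s.Monic := hs
    replace hs' : s'.Monic := hs'
    replace ht : t.Monic := ht
    replace ht' : t'.Monic := ht'
    replace hco : gcd s t = 1 := hco
    replace hco' : gcd s' t' = 1 := hco'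
    simp only [Subtype.mk.injEq, Subtype.ext_iff, Prod.mk.injEq] at h
    obtain ⟨h1, h2', h3⟩ := h
    have e1 : gcd (d * s ^ 2) (d * t ^ 2) = d := by
      rw [gcd_mul_left, aux_gcd_pow F hco, mul_one, hd.normalize_eq_self]
    have e2 : gcd (d' * s' ^ 2) (d' * t' ^ 2) = d' := by
      rw [gcd_mul_left, aux_gcd_pow F hco', mul_one, hd'.normalize_eq_self]
    have hdd : d = d' := by rw [← e1, h2', h3, e2]
    subst hdd
    have hss : s = s' := aux_sqrt F h2 hs hs' (mul_left_cancel₀ hd.ne_zero h2')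
    have htt : t = t' := aux_sqrt F h2 ht ht' (mul_left_cancel₀ hd.ne_zero h3)
    subst hss; subst htt
    rfl
  · rintro ⟨⟨f, a, b⟩, hf, ha, hb, hdeg, hab⟩
    replace hf : f.Monic := hf
    replace ha : a.Monic := ha
    replace hb : b.Monic := hb
    replace hdeg : f.natDegree = n := hdeg
    replace hab : a * b = f ^ 2 := hab
    have hd0 : gcd a b ≠ 0 := fun h => ha.ne_zero ((gcd_eq_zero_iff a b).mp h).1
    have hdm : (gcd a b).Monic := by
      have := Polynomial.monic_normalize hd0
      rwa [normalize_gcd] at this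
    obtain ⟨a₁, ha₁⟩ := gcd_dvd_left a b
    obtain ⟨b₁, hb₁⟩ := gcd_dvd_right a b
    set d := gcd a b with hd_def
    have ha₁m : a₁.Monic := hdm.of_mul_monic_left (ha₁ ▸ ha)
    have hb₁m : b₁.Monic := hdm.of_mul_monic_left (hb₁ ▸ hb)
    have hgg : gcd (d * a₁) (d * b₁) = d * gcd a₁ b₁ := by
      rw [gcd_mul_left, hdm.normalize_eq_self]
    have hh : d * gcd a₁ b₁ = d * 1 := by
      rw [mul_one, ← hgg, ← ha₁, ← hb₁, hd_def]
    have hco1 : gcd a₁ b₁ = 1 := mul_left_cancel₀ hd0 hh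
    have hdvdf : d ∣ f := by
      refine (IsIntegrallyClosed.pow_dvd_pow_iff two_ne_zero).mp ⟨a₁ * b₁, ?_⟩
      rw [← hab, ha₁, hb₁]
      ring
    obtain ⟨g, hgf⟩ := hdvdf
    have hgm : g.Monic := hdm.of_mul_monic_left (hgf ▸ hf)
    have hg2 : a₁ * b₁ = g ^ 2 := by
      apply mul_left_cancel₀ (pow_ne_zero 2 hd0)
      calc d ^ 2 * (a₁ * b₁) = (d * a₁) * (d * b₁) := by ring
        _ = a * b := by rw [← ha₁, ← hb₁]
        _ = f ^ 2 := hab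
        _ = d ^ 2 * g ^ 2 := by rw [hgf]; ring
    obtain ⟨c, hc⟩ := exists_associated_pow_of_mul_eq_pow
      (show IsUnit (gcd a₁ b₁) by rw [hco1]; exact isUnit_one) hg2
    obtain ⟨c', hc'⟩ := exists_associated_pow_of_mul_eq_pow
      (show IsUnit (gcd b₁ a₁) by rw [gcd_comm, hco1]; exact isUnit_one)
      (by rw [mul_comm]; exact hg2)
    have hc0 : c ≠ 0 := by
      rintro rfl
      rw [show ((0 : Polynomial F) ^ 2) = 0 by ring] at hc
      exact ha₁m.ne_zero ((associated_zero_iff_eq_zero a₁).mp hc.symm)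
    have hc'0 : c' ≠ 0 := by
      rintro rfl
      rw [show ((0 : Polynomial F) ^ 2) = 0 by ring] at hc'
      exact hb₁m.ne_zero ((associated_zero_iff_eq_zero b₁).mp hc'.symm)
    have hsm : (normalize c).Monic := Polynomial.monic_normalize hc0
    have htm : (normalize c').Monic := Polynomial.monic_normalize hc'0
    have hs2 : (normalize c) ^ 2 = a₁ := by
      calc (normalize c) ^ 2 = normalize (c ^ 2) := (map_pow normalizeHom c 2).symm
        _ = normalize a₁ := normalize_eq_normalize hc.dvd hc.symm.dvd
        _ = a₁ := ha₁m.normalize_eq_self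
    have ht2 : (normalize c') ^ 2 = b₁ := by
      calc (normalize c') ^ 2 = normalize (c' ^ 2) := (map_pow normalizeHom c' 2).symm
        _ = normalize b₁ := normalize_eq_normalize hc'.dvd hc'.symm.dvd
        _ = b₁ := hb₁m.normalize_eq_self
    have hg_st : g = normalize c * normalize c' :=
      aux_sqrt F h2 hgm (hsm.mul htm) (by rw [mul_pow, hs2, ht2]; exact hg2.symm)
    have hgcd_st : gcd (normalize c) (normalize c') = 1 := by
      have h1 : gcd (normalize c) (normalize c') ∣ 1 := by
        rw [← hco1]
        exact dvd_gcd
          (((gcd_dvd_left _ _).trans (dvd_pow_self _ two_ne_zero)).trans (dvd_of_eq hs2))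
          (((gcd_dvd_right _ _).trans (dvd_pow_self _ two_ne_zero)).trans (dvd_of_eq ht2))
      rw [← normalize_gcd]
      exact normalize_eq_one.mpr (isUnit_of_dvd_one h1)
    have e1 : d * normalize c * normalize c' = f := by
      rw [mul_assoc, ← hg_st, hgf]
    have e2 : d * (normalize c) ^ 2 = a := by rw [hs2, ← ha₁]
    have e3 : d * (normalize c') ^ 2 = b := by rw [ht2, ← hb₁]
    refine ⟨⟨(d, normalize c, normalize c'), hdm, hsm, htm, hgcd_st, ?_⟩, ?_⟩
    · show d.natDegree + (normalize c).natDegree + (normalize c').natDegree = n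
      have h5 := natDegree_mul (mul_ne_zero hd0 hsm.ne_zero) htm.ne_zero
      rw [e1] at h5
      rw [natDegree_mul hd0 hsm.ne_zero] at h5
      omega
    · exact Subtype.ext (by dsimp only; rw [e1, e2, e3])

lemma aux_card_all_rec (n : ℕ) :
    Nat.card (auxAll F n) =
      ∑ k ∈ Finset.range (n / 2 + 1), Fintype.card F ^ k * Nat.card (auxCo F (n - 2 * k)) := by
  classical
  have e : (Σ k : Fin (n / 2 + 1), auxMon F (k : ℕ) × auxCo F (n - 2 * (k : ℕ))) ≃
      auxAll F n := by
    refine Equiv.ofBijective (fun x =>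
      ⟨(x.2.2.1.1, x.2.1.1 * x.2.2.1.2.1, x.2.1.1 * x.2.2.1.2.2), ?_⟩) ⟨?_, ?_⟩
    · obtain ⟨⟨k, hk⟩, ⟨g, hgm, hgd⟩, ⟨⟨d, s, t⟩, hd, hs, ht, hco, hsum⟩⟩ := x
      replace hgd : g.natDegree = k := hgd
      replace hd : d.Monic := hd
      replace hs : s.Monic := hs
      replace ht : t.Monic := ht
      replace hsum : d.natDegree + s.natDegree + t.natDegree = n - 2 * k := hsum
      refine ⟨hd, hgm.mul hs, hgm.mul ht, ?_⟩
      show d.natDegree + (g * s).natDegree + (g * t).natDegree = n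
      rw [natDegree_mul hgm.ne_zero hs.ne_zero, natDegree_mul hgm.ne_zero ht.ne_zero, hgd]
      omega
    · rintro ⟨⟨k, hk⟩, ⟨g, hgm, hgd⟩, ⟨⟨d, s, t⟩, hd, hs, ht, hco, hsum⟩⟩
        ⟨⟨k', hk'⟩, ⟨g', hgm', hgd'⟩, ⟨⟨d', s', t'⟩, hd', hs', ht', hco', hsum'⟩⟩ h
      replace hgd : g.natDegree = k := hgd
      replace hgd' : g'.natDegree = k' := hgd'
      replace hco : gcd s t = 1 := hco
      replace hco' : gcd s' t' = 1 := hco'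
      simp only [Subtype.mk.injEq, Subtype.ext_iff, Prod.mk.injEq] at h
      obtain ⟨h1, h2, h3⟩ := h
      have e1 : gcd (g * s) (g * t) = g := by
        rw [gcd_mul_left, hco, mul_one, hgm.normalize_eq_self]
      have e2 : gcd (g' * s') (g' * t') = g' := by
        rw [gcd_mul_left, hco', mul_one, hgm'.normalize_eq_self]
      have hgg : g = g' := by rw [← e1, h2, h3, e2]
      subst hgg
      have hss : s = s' := mul_left_cancel₀ hgm.ne_zero h2
      have htt : t = t' := mul_left_cancel₀ hgm.ne_zero h3
      have hkk : k = k' := by rw [← hgd, ← hgd']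
      subst h1; subst hss; subst htt; subst hkk
      rfl
    · rintro ⟨⟨d, S, T⟩, hd, hS, hT, hsum⟩
      replace hd : d.Monic := hd
      replace hS : S.Monic := hS
      replace hT : T.Monic := hT
      replace hsum : d.natDegree + S.natDegree + T.natDegree = n := hsum
      have hg0 : gcd S T ≠ 0 := fun h => hS.ne_zero ((gcd_eq_zero_iff S T).mp h).1
      have hgm : (gcd S T).Monic := by
        have := Polynomial.monic_normalize hg0
        rwa [normalize_gcd] at this
      obtain ⟨s, hs_eq⟩ := gcd_dvd_left S T
      obtain ⟨t, ht_eq⟩ := gcd_dvd_right S T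
      set g := gcd S T with hg_def
      have hsm : s.Monic := hgm.of_mul_monic_left (hs_eq ▸ hS)
      have htm : t.Monic := hgm.of_mul_monic_left (ht_eq ▸ hT)
      have hgg : gcd (g * s) (g * t) = g * gcd s t := by
        rw [gcd_mul_left, hgm.normalize_eq_self]
      have hh : g * gcd s t = g * 1 := by
        rw [mul_one, ← hgg, ← hs_eq, ← ht_eq, hg_def]
      have hco : gcd s t = 1 := mul_left_cancel₀ hg0 hh
      have hSd : S.natDegree = g.natDegree + s.natDegree := by
        rw [hs_eq, natDegree_mul hg0 hsm.ne_zero]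
      have hTd : T.natDegree = g.natDegree + t.natDegree := by
        rw [ht_eq, natDegree_mul hg0 htm.ne_zero]
      refine ⟨⟨⟨g.natDegree, by omega⟩, ⟨g, hgm, rfl⟩,
        ⟨(d, s, t), hd, hsm, htm, hco, ?_⟩⟩, ?_⟩
      · show d.natDegree + s.natDegree + t.natDegree = n - 2 * g.natDegree
        omega
      · exact Subtype.ext (show (d, g * s, g * t) = (d, S, T) by rw [← hs_eq, ← ht_eq])
  rw [← Nat.card_congr e, aux_card_sigma,
    ← Fin.sum_univ_eq_sum_range
      (fun k => Fintype.card F ^ k * Nat.card (auxCo F (n - 2 * k))) (n / 2 + 1)]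
  refine Finset.sum_congr rfl fun k _ => ?_
  rw [Nat.card_prod, card_auxMon]

lemma aux_card_pair (m : ℕ) :
    Nat.card (auxPair F m) = (m + 1) * Fintype.card F ^ m := by
  classical
  have e : (Σ i : Fin (m + 1), auxMon F (i : ℕ) × auxMon F (m - (i : ℕ))) ≃ auxPair F m := by
    refine Equiv.ofBijective (fun x => ⟨(x.2.1.1, x.2.2.1), x.2.1.2.1, x.2.2.2.1, ?_⟩) ⟨?_, ?_⟩
    · obtain ⟨⟨i, hi⟩, ⟨s, hsm, hsd⟩, ⟨t, htm, htd⟩⟩ := x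
      replace hsd : s.natDegree = i := hsd
      replace htd : t.natDegree = m - i := htd
      show s.natDegree + t.natDegree = m
      omega
    · rintro ⟨⟨i, hi⟩, ⟨s, hsm, hsd⟩, ⟨t, htm, htd⟩⟩
        ⟨⟨i', hi'⟩, ⟨s', hsm', hsd'⟩, ⟨t', htm', htd'⟩⟩ h
      replace hsd : s.natDegree = i := hsd
      replace hsd' : s'.natDegree = i' := hsd'
      simp only [Subtype.mk.injEq, Subtype.ext_iff, Prod.mk.injEq] at h
      obtain ⟨h1, h2⟩ := h
      have hii : i = i' := by rw [← hsd, ← hsd', h1]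
      subst h1; subst h2; subst hii
      rfl
    · rintro ⟨⟨s, t⟩, hsm, htm, hsum⟩
      replace hsm : s.Monic := hsm
      replace htm : t.Monic := htm
      replace hsum : s.natDegree + t.natDegree = m := hsum
      exact ⟨⟨⟨s.natDegree, by omega⟩, ⟨s, hsm, rfl⟩,
        ⟨t, htm, (by omega : t.natDegree = m - s.natDegree)⟩⟩, rfl⟩
  rw [← Nat.card_congr e, aux_card_sigma, Fin.sum_univ_eq_sum_range
    (fun i => Nat.card (auxMon F i × auxMon F (m - i)))]
  have h1 : ∀ i ∈ Finset.range (m + 1),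
      Nat.card (auxMon F i × auxMon F (m - i)) = Fintype.card F ^ m := by
    intro i hi
    rw [Finset.mem_range] at hi
    rw [Nat.card_prod, card_auxMon, card_auxMon, ← pow_add]
    congr 1
    omega
  rw [Finset.sum_congr rfl h1, Finset.sum_const, Finset.card_range, smul_eq_mul]

lemma aux_card_all (n : ℕ) :
    Nat.card (auxAll F n) =
      (∑ k ∈ Finset.range (n + 1), (n - k + 1)) * Fintype.card F ^ n := by
  classical
  have e : (Σ k : Fin (n + 1), auxMon F (k : ℕ) × auxPair F (n - (k : ℕ))) ≃ auxAll F n := by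
    refine Equiv.ofBijective (fun x =>
      ⟨(x.2.1.1, x.2.2.1.1, x.2.2.1.2), x.2.1.2.1, x.2.2.2.1, x.2.2.2.2.1, ?_⟩) ⟨?_, ?_⟩
    · obtain ⟨⟨k, hk⟩, ⟨g, hgm, hgd⟩, ⟨⟨s, t⟩, hsm, htm, hsum⟩⟩ := x
      replace hgd : g.natDegree = k := hgd
      replace hsum : s.natDegree + t.natDegree = n - k := hsum
      show g.natDegree + s.natDegree + t.natDegree = n
      omega
    · rintro ⟨⟨k, hk⟩, ⟨g, hgm, hgd⟩, ⟨⟨s, t⟩, hsm, htm, hsum⟩⟩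
        ⟨⟨k', hk'⟩, ⟨g', hgm', hgd'⟩, ⟨⟨s', t'⟩, hsm', htm', hsum'⟩⟩ h
      replace hgd : g.natDegree = k := hgd
      replace hgd' : g'.natDegree = k' := hgd'
      simp only [Subtype.mk.injEq, Subtype.ext_iff, Prod.mk.injEq] at h
      obtain ⟨h1, h2, h3⟩ := h
      have hkk : k = k' := by rw [← hgd, ← hgd', h1]
      subst h1; subst h2; subst h3; subst hkk
      rfl
    · rintro ⟨⟨g, s, t⟩, hgm, hsm, htm, hsum⟩
      replace hgm : g.Monic := hgm
      replace hsm : s.Monic := hsm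
      replace htm : t.Monic := htm
      replace hsum : g.natDegree + s.natDegree + t.natDegree = n := hsum
      exact ⟨⟨⟨g.natDegree, by omega⟩, ⟨g, hgm, rfl⟩,
        ⟨(s, t), hsm, htm, (by omega : s.natDegree + t.natDegree = n - g.natDegree)⟩⟩, rfl⟩
  rw [← Nat.card_congr e, aux_card_sigma, Fin.sum_univ_eq_sum_range
    (fun k => Nat.card (auxMon F k × auxPair F (n - k)))]
  have h1 : ∀ k ∈ Finset.range (n + 1),
      Nat.card (auxMon F k × auxPair F (n - k)) = (n - k + 1) * Fintype.card F ^ n := by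
    intro k hk
    rw [Finset.mem_range] at hk
    rw [Nat.card_prod, card_auxMon, aux_card_pair]
    calc Fintype.card F ^ k * ((n - k + 1) * Fintype.card F ^ (n - k))
        = (n - k + 1) * (Fintype.card F ^ k * Fintype.card F ^ (n - k)) := by ring
      _ = (n - k + 1) * Fintype.card F ^ n := by rw [← pow_add]; congr 2; omega
  rw [Finset.sum_congr rfl h1, ← Finset.sum_mul]

lemma aux_gauss : ∀ m : ℕ, 2 * ∑ k ∈ Finset.range (m + 1), (m - k + 1) = (m + 1) * (m + 2) := by
  intro m
  induction m with
  | zero => simp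
  | succ m ih =>
    rw [Finset.sum_range_succ' (fun k => m + 1 - k + 1) (m + 1)]
    simp only [Nat.succ_sub_succ_eq_sub, Nat.sub_zero]
    rw [Nat.mul_add, ih]
    ring

lemma aux_card_all2 (m : ℕ) :
    2 * Nat.card (auxAll F m) = (m + 1) * (m + 2) * Fintype.card F ^ m := by
  rw [aux_card_all F m, ← mul_assoc, aux_gauss m]

theorem sum_d2_sq' (hq : Odd (Fintype.card F)) (n : ℕ) :
    ∑ᶠ f ∈ {f : Polynomial F | f.Monic ∧ f.natDegree = n}, (dk F 2 (f ^ 2) : ℝ) =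
      (1 + (1 / 2) * (3 + (Fintype.card F : ℝ)⁻¹) * (n : ℝ)
         + (1 / 2) * (1 - (Fintype.card F : ℝ)⁻¹) * (n : ℝ) ^ 2) *
        (Fintype.card F : ℝ) ^ n := by
  have h2 : (2 : F) ≠ 0 := aux_two_ne_zero F hq
  have hq0 : (Fintype.card F : ℝ) ≠ 0 := Nat.cast_ne_zero.mpr Fintype.card_ne_zero
  have hL : ∑ᶠ f ∈ {f : Polynomial F | f.Monic ∧ f.natDegree = n}, (dk F 2 (f ^ 2) : ℝ)
      = (Nat.card (auxCo F n) : ℝ) := by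
    rw [show {f : Polynomial F | f.Monic ∧ f.natDegree = n} = (auxMon F n) from rfl,
      ← (auxMon_finite F n).coe_toFinset, finsum_mem_coe_finset, ← Nat.cast_sum]
    exact_mod_cast congrArg (Nat.cast : ℕ → ℝ)
      ((aux_sum_eq F n).trans (aux_card_sq F h2 n))
  rw [hL]
  have hAll : ∀ m : ℕ, (Nat.card (auxAll F m) : ℝ) =
      ((m : ℝ) + 1) * ((m : ℝ) + 2) / 2 * (Fintype.card F : ℝ) ^ m := by
    intro m
    have h := congrArg (Nat.cast : ℕ → ℝ) (aux_card_all2 F m)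
    push_cast at h
    linarith
  have hrec : ∀ m : ℕ, (Nat.card (auxAll F m) : ℝ) =
      ∑ k ∈ Finset.range (m / 2 + 1),
        (Fintype.card F : ℝ) ^ k * (Nat.card (auxCo F (m - 2 * k)) : ℝ) := by
    intro m
    rw [aux_card_all_rec F m]
    push_cast
    rfl
  match n with
  | 0 =>
    have h := hrec 0
    rw [hAll 0] at h
    simp only [Nat.zero_div, zero_add, Finset.sum_range_one, pow_zero, one_mul,
      Nat.mul_zero, Nat.sub_zero] at h
    rw [← h]
    norm_num
  | 1 =>
    have h := hrec 1
    rw [hAll 1] at h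
    simp only [Nat.reduceDiv, zero_add, Finset.sum_range_one, pow_zero, one_mul,
      Nat.mul_zero, Nat.sub_zero] at h
    rw [← h]
    push_cast
    field_simp
    ring
  | (m + 2) =>
    have h1 := hrec (m + 2)
    have hdiv : (m + 2) / 2 = m / 2 + 1 := by omega
    rw [hdiv, Finset.sum_range_succ' _ (m / 2 + 1)] at h1
    have h3 : ∑ i ∈ Finset.range (m / 2 + 1),
        (Fintype.card F : ℝ) ^ (i + 1) * (Nat.card (auxCo F (m + 2 - 2 * (i + 1))) : ℝ)
        = (Fintype.card F : ℝ) * (Nat.card (auxAll F m) : ℝ) := by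
      rw [hrec m, Finset.mul_sum]
      refine Finset.sum_congr rfl fun i hi => ?_
      have he : m + 2 - 2 * (i + 1) = m - 2 * i := by omega
      rw [he, pow_succ]
      ring
    rw [h3] at h1
    simp only [Nat.mul_zero, Nat.sub_zero, pow_zero, one_mul] at h1
    have hc : (Nat.card (auxCo F (m + 2)) : ℝ) =
        (Nat.card (auxAll F (m + 2)) : ℝ)
          - (Fintype.card F : ℝ) * (Nat.card (auxAll F m) : ℝ) := by
      linarith
    rw [hc, hAll (m + 2), hAll m]
    push_cast
    field_simp
    ring

/-- exact evaluation of `∑_{deg f = n} d_2(f²)`. -/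
theorem sum_d2_sq (F : Type) [Field F] [Fintype F] (hq : Odd (Fintype.card F)) (n : ℕ) :
    ∑ᶠ f ∈ {f : Polynomial F | f.Monic ∧ f.natDegree = n}, (dk F 2 (f ^ 2) : ℝ) =
      (1 + (1 / 2) * (3 + (Fintype.card F : ℝ)⁻¹) * (n : ℝ)
         + (1 / 2) * (1 - (Fintype.card F : ℝ)⁻¹) * (n : ℝ) ^ 2) *
        (Fintype.card F : ℝ) ^ n := by
  exact sum_d2_sq' F hq n

end
end

section
/- There exists a constant c > 1 (depending only on q) such that for every integer k ≥ 3, a_k = ∑_{f monic in A} d_k(f²)/|f|² ≤ c^{k · ln ln k}. -/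
open Polynomial
open scoped Classical

noncomputable section

variable (F : Type) [Field F] [Fintype F]

section AkAuxSection

open UniqueFactorizationMonoid

set_option linter.unusedSectionVars false
set_option maxHeartbeats 1000000

namespace AkAux

variable {F}

/-- Polynomials of degree ≤ M over a finite field form a finite set. -/
lemma finite_deg_le (M : ℕ) : {p : Polynomial F | p.natDegree ≤ M}.Finite := by
  have hinj : Set.InjOn (fun p : Polynomial F => fun i : Fin (M + 1) => p.coeff i)
      {p | p.natDegree ≤ M} := by
    intro p hp q hq h
    ext n
    by_cases hn : n ≤ M
    · have := congrFun h ⟨n, by omega⟩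
      simpa using this
    · rw [coeff_eq_zero_of_natDegree_lt (by simp only [Set.mem_setOf_eq] at hp; omega),
        coeff_eq_zero_of_natDegree_lt (by simp only [Set.mem_setOf_eq] at hq; omega)]
  exact Set.Finite.of_finite_image (Set.toFinite _) hinj

/-- Members of `normalizedFactors` are monic. -/
lemma monic_of_mem_nf {g P : Polynomial F} (hP : P ∈ normalizedFactors g) : P.Monic := by
  have h1 : normalize P = P := normalize_normalized_factor P hP
  have h2 : P ≠ 0 := (prime_of_normalized_factor P hP).ne_zero
  have := monic_normalize (p := P) h2
  rwa [h1] at this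

/-- A monic polynomial equals the product of its normalized factors. -/
lemma monic_prod_nf {g : Polynomial F} (hg : g.Monic) : (normalizedFactors g).prod = g := by
  have h := prod_normalizedFactors hg.ne_zero
  refine eq_of_monic_of_associated ?_ hg h
  have := monic_multiset_prod_of_monic (normalizedFactors g) id
    (fun p hp => monic_of_mem_nf hp)
  simpa using this

/-- Degree of a monic polynomial as a sum over a finset containing its factors. -/
lemma natDegree_eq_sum_nf {g : Polynomial F} (hg : g.Monic) (Ps : Finset (Polynomial F))
    (h : ∀ P ∈ normalizedFactors g, P ∈ Ps) :
    g.natDegree = ∑ P ∈ Ps, (normalizedFactors g).count P * P.natDegree := by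
  conv_lhs => rw [← monic_prod_nf hg]
  rw [natDegree_multiset_prod_of_monic _ (fun p hp => monic_of_mem_nf hp)]
  rw [Finset.sum_multiset_map_count]
  rw [Finset.sum_subset (fun P hP => h P (Multiset.mem_toFinset.mp hP))]
  · simp [smul_eq_mul]
  · intro P _ hP
    rw [Multiset.count_eq_zero_of_notMem (fun hc => hP (Multiset.mem_toFinset.mpr hc))]
    simp

/-- Reconstruction of a monic polynomial from its factor multiplicities. -/
lemma eq_prod_pow_nf {g : Polynomial F} (hg : g.Monic) (Ps : Finset (Polynomial F))
    (h : ∀ P ∈ normalizedFactors g, P ∈ Ps) :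
    g = ∏ P ∈ Ps, P ^ ((normalizedFactors g).count P) := by
  conv_lhs => rw [← monic_prod_nf hg]
  rw [Finset.prod_multiset_count]
  refine Finset.prod_subset (fun P hP => h P (Multiset.mem_toFinset.mp hP)) ?_
  intro P _ hP
  rw [Multiset.count_eq_zero_of_notMem (fun hc => hP (Multiset.mem_toFinset.mpr hc))]
  simp

/-- normalizedFactors of a finite product. -/
lemma nf_prod_eq {ι : Type*} (s : Finset ι) (t : ι → Polynomial F) (ht : ∀ i ∈ s, t i ≠ 0) :
    normalizedFactors (∏ i ∈ s, t i) = ∑ i ∈ s, normalizedFactors (t i) := by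
  classical
  induction s using Finset.induction_on with
  | empty => simp [normalizedFactors_one]
  | @insert a s' hx ih =>
    rw [Finset.prod_insert hx, Finset.sum_insert hx,
      normalizedFactors_mul (ht a (Finset.mem_insert_self a s'))
        (Finset.prod_ne_zero_iff.mpr fun i hi => ht i (Finset.mem_insert_of_mem hi)),
      ih fun i hi => ht i (Finset.mem_insert_of_mem hi)]

/-- Squaring is injective on monic polynomials. -/
lemma monic_sq_inj {f g : Polynomial F} (hf : f.Monic) (hg : g.Monic) (h : f ^ 2 = g ^ 2) :
    f = g := by
  have h2 : (2 : ℕ) • normalizedFactors f = (2 : ℕ) • normalizedFactors g := by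
    rw [← normalizedFactors_pow, ← normalizedFactors_pow, h]
  have : normalizedFactors f = normalizedFactors g := by
    ext a
    have := congrArg (Multiset.count a) h2
    simpa [Multiset.count_nsmul] using this
  rw [← monic_prod_nf hf, ← monic_prod_nf hg, this]


/-- Every monic irreducible polynomial of degree `n ≥ 1` divides `X^(q^n) - X`. -/
lemma irreducible_dvd_X_pow_card (P : Polynomial F) (hirr : Irreducible P) :
    P ∣ (X ^ (Fintype.card F ^ P.natDegree) - X) := by
  haveI : Fact (Irreducible P) := ⟨hirr⟩
  have hP0 : P ≠ 0 := hirr.ne_zero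
  haveI : Module.Finite F (AdjoinRoot P) := (AdjoinRoot.powerBasis hP0).finite
  haveI : Finite (AdjoinRoot P) := Module.finite_of_finite F
  haveI : Fintype (AdjoinRoot P) := Fintype.ofFinite _
  have hcard : Fintype.card (AdjoinRoot P) = Fintype.card F ^ P.natDegree := by
    rw [Module.card_eq_pow_finrank (K := F) (V := AdjoinRoot P), (AdjoinRoot.powerBasis hP0).finrank,
      AdjoinRoot.powerBasis_dim]
  have hroot : (AdjoinRoot.root P) ^ (Fintype.card F ^ P.natDegree) = AdjoinRoot.root P := by
    rw [← hcard]; exact FiniteField.pow_card _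
  rw [← AdjoinRoot.mk_eq_zero (f := P)]
  rw [map_sub, map_pow, AdjoinRoot.mk_X, hroot, sub_self]

/-- `n · #{monic irreducibles of degree n} ≤ q^n`. -/
lemma card_primes_le {n : ℕ} (hn : 1 ≤ n) (T : Finset (Polynomial F))
    (hT : ∀ P ∈ T, P.Monic ∧ Irreducible P ∧ P.natDegree = n) :
    n * T.card ≤ Fintype.card F ^ n := by
  set q := Fintype.card F with hqdef
  have hq1 : 1 < q := Fintype.one_lt_card
  have hqn : 1 < q ^ n := Nat.one_lt_pow (by omega) hq1
  set W : Polynomial F := X ^ (q ^ n) - X with hW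
  have hWdeg : W.natDegree = q ^ n := FiniteField.X_pow_card_sub_X_natDegree_eq F hqn
  have hWne : W ≠ 0 := FiniteField.X_pow_card_sub_X_ne_zero F hqn
  have hdvd : T.val.prod ∣ W := by
    refine Multiset.prod_primes_dvd W ?_ ?_ ?_
    · intro a ha
      exact (UniqueFactorizationMonoid.irreducible_iff_prime).mp (hT a ha).2.1
    · intro a ha
      have := irreducible_dvd_X_pow_card a (hT a ha).2.1
      rwa [(hT a ha).2.2] at this
    · intro a
      have : Multiset.countP (Associated a) T.val = (T.filter (Associated a)).card := by
        rw [Finset.card_filter, Finset.sum_boole]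
        rw [Multiset.countP_eq_card_filter]
        rfl
      rw [this]
      refine Finset.card_le_one.mpr ?_
      intro b hb c hc
      simp only [Finset.mem_filter] at hb hc
      have hbc : Associated b c := hb.2.symm.trans hc.2
      exact eq_of_monic_of_associated (hT b hb.1).1 (hT c hc.1).1 hbc
  have hproddeg : (T.val.prod).natDegree = n * T.card := by
    rw [natDegree_multiset_prod_of_monic _ (fun f hf => (hT f hf).1)]
    rw [Multiset.map_congr rfl (fun f hf => (hT f hf).2.2)]
    simp [Multiset.map_const', mul_comm]
  calc n * T.card = (T.val.prod).natDegree := hproddeg.symm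
    _ ≤ W.natDegree := natDegree_le_of_dvd hdvd hWne
    _ = q ^ n := hWdeg

/-- `exp x + exp (-x) ≤ 2(1+x²)` for `|x| ≤ 1`. -/
lemma cosh_bound {x : ℝ} (hx : |x| ≤ 1) : Real.exp x + Real.exp (-x) ≤ 2 * (1 + x ^ 2) := by
  have h1 := Real.exp_bound hx (n := 2) (by norm_num)
  have h2 := Real.exp_bound (x := -x) (by rwa [abs_neg]) (n := 2) (by norm_num)
  have e1 : ∑ m ∈ Finset.range 2, x ^ m / (m.factorial : ℝ) = 1 + x := by
    simp [Finset.sum_range_succ]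
  have e2 : ∑ m ∈ Finset.range 2, (-x) ^ m / (m.factorial : ℝ) = 1 - x := by
    simp [Finset.sum_range_succ]; ring
  rw [e1] at h1
  rw [e2] at h2
  have b1 : Real.exp x ≤ 1 + x + x ^ 2 * (3 / 4) := by
    have h := (abs_le.mp h1).2
    norm_num [Nat.factorial] at h
    linarith
  have b2 : Real.exp (-x) ≤ 1 - x + x ^ 2 * (3 / 4) := by
    have h := (abs_le.mp h2).2
    norm_num [Nat.factorial, abs_neg] at h
    linarith
  nlinarith [b1, b2]

section Local

variable (M : ℕ) (u : ℝ)

/-- The truncated geometric series. -/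
def G (x : ℝ) : ℝ := ∑ e ∈ Finset.range (M + 1), x ^ e

variable {M u}

lemma G_tail (hM : 2 ≤ M) (x : ℝ) :
    G M x = 1 + x + ∑ i ∈ Finset.range (M - 1), x ^ (2 + i) := by
  have h : G M x = ∑ e ∈ Finset.range 2, x ^ e + ∑ e ∈ Finset.Ico 2 (M + 1), x ^ e := by
    rw [Finset.sum_range_add_sum_Ico _ (by omega : 2 ≤ M + 1)]
    rfl
  rw [h, Finset.sum_Ico_eq_sum_range]
  have : M + 1 - 2 = M - 1 := by omega
  rw [this]
  simp [Finset.sum_range_succ]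

lemma tail_bound (hu0 : 0 < u) (hu : u ≤ 1 / 3) (hM : 2 ≤ M) :
    ∑ i ∈ Finset.range (M - 1), u ^ (2 + i) ≤ (3 / 2) * u ^ 2 := by
  have h1 : ∑ i ∈ Finset.range (M - 1), u ^ (2 + i)
      = u ^ 2 * ∑ i ∈ Finset.range (M - 1), u ^ i := by
    rw [Finset.mul_sum]
    exact Finset.sum_congr rfl fun i _ => by rw [pow_add]
  have h2 : ∑ i ∈ Finset.range (M - 1), u ^ i ≤ 3 / 2 := by
    have hgeom : ∑ i ∈ Finset.range (M - 1), u ^ i ≤ 1 / (1 - u) := by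
      have h3 : (∑ i ∈ Finset.range (M - 1), u ^ i) * (1 - u) = 1 - u ^ (M - 1) := by
        have := geom_sum_mul u (M - 1)
        nlinarith [this]
      have h4 : (0 : ℝ) < 1 - u := by linarith
      rw [le_div_iff₀ h4]
      nlinarith [pow_nonneg hu0.le (M - 1)]
    have : (1 : ℝ) / (1 - u) ≤ 3 / 2 := by
      rw [div_le_div_iff₀ (by linarith) (by norm_num)]
      linarith
    linarith
  calc ∑ i ∈ Finset.range (M - 1), u ^ (2 + i) = u ^ 2 * ∑ i ∈ Finset.range (M - 1), u ^ i := h1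
    _ ≤ u ^ 2 * (3 / 2) := by
        apply mul_le_mul_of_nonneg_left h2 (by positivity)
    _ = (3 / 2) * u ^ 2 := by ring

lemma G_pos_le (hu0 : 0 < u) (hu : u ≤ 1 / 3) (hM : 2 ≤ M) :
    G M u ≤ 1 + u + (3 / 2) * u ^ 2 := by
  rw [G_tail hM]
  have := tail_bound hu0 hu hM
  linarith

lemma G_neg_le (hu0 : 0 < u) (hu : u ≤ 1 / 3) (hM : 2 ≤ M) :
    G M (-u) ≤ 1 - u + (3 / 2) * u ^ 2 := by
  rw [G_tail hM]
  have h : ∑ i ∈ Finset.range (M - 1), (-u) ^ (2 + i) ≤ ∑ i ∈ Finset.range (M - 1), u ^ (2 + i) := by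
    apply Finset.sum_le_sum
    intro i _
    calc (-u) ^ (2 + i) ≤ |(-u) ^ (2 + i)| := le_abs_self _
      _ = u ^ (2 + i) := by rw [abs_pow, abs_neg, abs_of_pos hu0]
  have := tail_bound hu0 hu hM
  linarith

lemma G_neg_nonneg (hu0 : 0 < u) (hu : u ≤ 1 / 3) (hM : 2 ≤ M) : 0 ≤ G M (-u) := by
  rw [G_tail hM]
  have h : -(∑ i ∈ Finset.range (M - 1), u ^ (2 + i))
      ≤ ∑ i ∈ Finset.range (M - 1), (-u) ^ (2 + i) := by
    rw [← Finset.sum_neg_distrib]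
    apply Finset.sum_le_sum
    intro i _
    calc -(u ^ (2 + i)) = -|(-u) ^ (2 + i)| := by rw [abs_pow, abs_neg, abs_of_pos hu0]
      _ ≤ (-u) ^ (2 + i) := neg_abs_le _
  have := tail_bound hu0 hu hM
  nlinarith

lemma G_nonneg (hu0 : 0 < u) : 0 ≤ G M u :=
  Finset.sum_nonneg fun e _ => pow_nonneg hu0.le e

lemma G_le_geom (hu0 : 0 < u) (hu : u ≤ 1 / 3) : G M u ≤ 1 + (3 / 2) * u := by
  have h3 : (G M u) * (1 - u) = 1 - u ^ (M + 1) := by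
    have := geom_sum_mul u (M + 1)
    unfold G
    nlinarith [this]
  nlinarith [pow_nonneg hu0.le (M + 1), G_nonneg (M := M) hu0]

end Local

section LocalBound

lemma local_sum_eq (k M : ℕ) (x : ℝ) :
    ∑ v ∈ Fintype.piFinset (fun _ : Fin k => Finset.range (M + 1)), x ^ (∑ i, v i)
      = (G M x) ^ k := by
  calc ∑ v ∈ Fintype.piFinset (fun _ : Fin k => Finset.range (M + 1)), x ^ (∑ i, v i)
      = ∑ v ∈ Fintype.piFinset (fun _ : Fin k => Finset.range (M + 1)), ∏ i, x ^ (v i) := by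
        refine Finset.sum_congr rfl fun v _ => ?_
        rw [Finset.prod_pow_eq_pow_sum]
    _ = ∏ _i : Fin k, ∑ e ∈ Finset.range (M + 1), x ^ e :=
        (Finset.prod_univ_sum _ _).symm
    _ = (G M x) ^ k := by rw [Finset.prod_const]; simp [G]

lemma exp_pow_bound (k : ℕ) {c : ℝ} (hGnn : 0 ≤ c) {a : ℝ} (hc : c ≤ 1 + a) :
    c ^ k ≤ Real.exp ((k : ℝ) * a) := by
  have h1 : c ^ k ≤ (1 + a) ^ k := pow_le_pow_left₀ hGnn hc k
  have h2 : (1 + a) ^ k ≤ (Real.exp a) ^ k := by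
    apply pow_le_pow_left₀ (by linarith) (by linarith [Real.add_one_le_exp a]) k
  have h3 : (Real.exp a) ^ k = Real.exp ((k : ℝ) * a) := by
    rw [← Real.exp_nat_mul]
  linarith

lemma local_bound (k M : ℕ) (hk : 3 ≤ k) (hM : 2 ≤ M) {u : ℝ} (hu0 : 0 < u) (hu : u ≤ 1 / 3) :
    ∑ v ∈ (Fintype.piFinset (fun _ : Fin k => Finset.range (M + 1))).filter
        (fun v => Even (∑ i, v i)), u ^ (∑ i, v i)
      ≤ Real.exp (if (k : ℝ) * u ≤ 1 then 3 * (k : ℝ) ^ 2 * u ^ 2 else (3 / 2) * k * u) := by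
  set P := Fintype.piFinset (fun _ : Fin k => Finset.range (M + 1)) with hP
  set S := ∑ v ∈ P.filter (fun v => Even (∑ i, v i)), u ^ (∑ i, v i) with hSdef
  have hk1 : (1 : ℝ) ≤ (k : ℝ) := Nat.one_le_cast.mpr (by omega)
  split_ifs with hcase
  · -- refined bound for small u
    have hid : 2 * S = (G M u) ^ k + (G M (-u)) ^ k := by
      rw [← local_sum_eq k M u, ← local_sum_eq k M (-u), ← Finset.sum_add_distrib, ← hP]
      rw [← Finset.sum_filter_add_sum_filter_not P (fun v => Even (∑ i, v i))
            (fun v => u ^ (∑ i, v i) + (-u) ^ (∑ i, v i))]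
      have h1 : ∑ v ∈ P.filter (fun v => Even (∑ i, v i)),
          (u ^ (∑ i, v i) + (-u) ^ (∑ i, v i)) = 2 * S := by
        rw [hSdef, Finset.mul_sum]
        refine Finset.sum_congr rfl fun v hv => ?_
        have hev : Even (∑ i, v i) := (Finset.mem_filter.mp hv).2
        rw [hev.neg_pow]; ring
      have h2 : ∑ v ∈ P.filter (fun v => ¬ Even (∑ i, v i)),
          (u ^ (∑ i, v i) + (-u) ^ (∑ i, v i)) = 0 := by
        refine Finset.sum_eq_zero fun v hv => ?_
        have hodd : Odd (∑ i, v i) := Nat.not_even_iff_odd.mp (Finset.mem_filter.mp hv).2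
        rw [hodd.neg_pow]; ring
      rw [h1, h2, add_zero]
    have hGu : (G M u) ^ k ≤ Real.exp ((k : ℝ) * (u + 3 / 2 * u ^ 2)) :=
      exp_pow_bound k (G_nonneg hu0) (by linarith [G_pos_le hu0 hu hM])
    have hGnu : (G M (-u)) ^ k ≤ Real.exp ((k : ℝ) * (-u + 3 / 2 * u ^ 2)) :=
      exp_pow_bound k (G_neg_nonneg hu0 hu hM) (by linarith [G_neg_le hu0 hu hM])
    have he1 : Real.exp ((k : ℝ) * (u + 3 / 2 * u ^ 2))
        = Real.exp (3 / 2 * k * u ^ 2) * Real.exp ((k : ℝ) * u) := by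
      rw [← Real.exp_add]; congr 1; ring
    have he2 : Real.exp ((k : ℝ) * (-u + 3 / 2 * u ^ 2))
        = Real.exp (3 / 2 * k * u ^ 2) * Real.exp (-((k : ℝ) * u)) := by
      rw [← Real.exp_add]; congr 1; ring
    have hcosh : Real.exp ((k : ℝ) * u) + Real.exp (-((k : ℝ) * u)) ≤ 2 * (1 + ((k : ℝ) * u) ^ 2) :=
      cosh_bound (abs_le.mpr ⟨by nlinarith, hcase⟩)
    have hexp_pos : (0 : ℝ) < Real.exp (3 / 2 * k * u ^ 2) := Real.exp_pos _
    have h2S : 2 * S ≤ Real.exp (3 / 2 * k * u ^ 2) * (2 * (1 + ((k : ℝ) * u) ^ 2)) := by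
      rw [hid]
      calc (G M u) ^ k + (G M (-u)) ^ k
          ≤ Real.exp ((k : ℝ) * (u + 3 / 2 * u ^ 2))
            + Real.exp ((k : ℝ) * (-u + 3 / 2 * u ^ 2)) := by linarith
        _ = Real.exp (3 / 2 * k * u ^ 2)
            * (Real.exp ((k : ℝ) * u) + Real.exp (-((k : ℝ) * u))) := by
            rw [he1, he2]; ring
        _ ≤ Real.exp (3 / 2 * k * u ^ 2) * (2 * (1 + ((k : ℝ) * u) ^ 2)) := by
            apply mul_le_mul_of_nonneg_left hcosh hexp_pos.le
    have hquad : 1 + ((k : ℝ) * u) ^ 2 ≤ Real.exp (((k : ℝ) * u) ^ 2) := by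
      linarith [Real.add_one_le_exp (((k : ℝ) * u) ^ 2)]
    have : S ≤ Real.exp (3 / 2 * k * u ^ 2) * Real.exp (((k : ℝ) * u) ^ 2) := by
      nlinarith [Real.exp_pos (((k : ℝ) * u) ^ 2), hexp_pos]
    calc S ≤ Real.exp (3 / 2 * k * u ^ 2) * Real.exp (((k : ℝ) * u) ^ 2) := this
      _ = Real.exp (3 / 2 * k * u ^ 2 + ((k : ℝ) * u) ^ 2) := by rw [← Real.exp_add]
      _ ≤ Real.exp (3 * (k : ℝ) ^ 2 * u ^ 2) := by
          apply Real.exp_le_exp.mpr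
          nlinarith [sq_nonneg u, hk1]
  · -- crude bound
    have hsub : S ≤ (G M u) ^ k := by
      rw [← local_sum_eq k M u, hSdef]
      apply Finset.sum_le_sum_of_subset_of_nonneg (Finset.filter_subset _ _)
      intro v _ _
      positivity
    have hGu : (G M u) ^ k ≤ Real.exp ((k : ℝ) * (3 / 2 * u)) :=
      exp_pow_bound k (G_nonneg hu0) (by linarith [G_le_geom (M := M) hu0 hu])
    calc S ≤ (G M u) ^ k := hsub
      _ ≤ Real.exp ((k : ℝ) * (3 / 2 * u)) := hGu
      _ = Real.exp (3 / 2 * k * u) := by congr 1; ring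
end LocalBound


lemma three_le_card (hodd : Odd (Fintype.card F)) : 3 ≤ Fintype.card F := by
  have h2 : 1 < Fintype.card F := Fintype.one_lt_card
  rcases hodd with ⟨m, hm⟩
  omega

lemma log_three_gt_one : (1 : ℝ) < Real.log 3 := by
  have h : Real.exp 1 < 3 := by
    calc Real.exp 1 < 2.7182818286 := Real.exp_one_lt_d9
      _ < 3 := by norm_num
  exact (Real.lt_log_iff_exp_lt (by norm_num)).mpr h

lemma geom_Icc_le {r : ℝ} (hr0 : 0 < r) (hr13 : r ≤ 1 / 3) (a N : ℕ) :
    ∑ n ∈ Finset.Icc a N, r ^ n ≤ r ^ a * (3 / 2) := by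
  rw [← Finset.Ico_add_one_right_eq_Icc, Finset.sum_Ico_eq_sum_range]
  have h1 : ∑ i ∈ Finset.range (N + 1 - a), r ^ (a + i)
      = r ^ a * ∑ i ∈ Finset.range (N + 1 - a), r ^ i := by
    rw [Finset.mul_sum]
    exact Finset.sum_congr rfl fun i _ => by rw [pow_add]
  rw [h1]
  apply mul_le_mul_of_nonneg_left ?_ (pow_nonneg hr0.le a)
  have h3 : (∑ i ∈ Finset.range (N + 1 - a), r ^ i) * (1 - r) = 1 - r ^ (N + 1 - a) := by
    have := geom_sum_mul r (N + 1 - a)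
    nlinarith [this]
  nlinarith [pow_nonneg hr0.le (N + 1 - a)]

lemma ell_sum_bound (hodd : Odd (Fintype.card F)) (k N : ℕ) (hk : 3 ≤ k)
    (Ps : Finset (Polynomial F))
    (hPs : ∀ P ∈ Ps, P.Monic ∧ Irreducible P ∧ P.natDegree ≤ N) :
    ∑ P ∈ Ps, (if (k : ℝ) * ((Fintype.card F : ℝ))⁻¹ ^ P.natDegree ≤ 1
        then 3 * (k : ℝ) ^ 2 * (((Fintype.card F : ℝ))⁻¹ ^ P.natDegree) ^ 2
        else (3 / 2) * (k : ℝ) * ((Fintype.card F : ℝ))⁻¹ ^ P.natDegree)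
      ≤ 6 * (k : ℝ) + (3 / 2) * (k : ℝ) * Real.log (Real.log k) := by
  have hq3 : 3 ≤ Fintype.card F := three_le_card hodd
  set q : ℕ := Fintype.card F with hq
  set r : ℝ := ((q : ℝ))⁻¹ with hrdef
  have hq0 : (0 : ℝ) < (q : ℝ) := by positivity
  have hr0 : 0 < r := by positivity
  have hr13 : r ≤ 1 / 3 := by
    rw [hrdef, inv_le_comm₀ hq0 (by norm_num)]
    norm_num
    exact_mod_cast hq3
  have hqr : (q : ℝ) * r = 1 := mul_inv_cancel₀ (ne_of_gt hq0)
  have hk1 : (1 : ℝ) ≤ (k : ℝ) := Nat.one_le_cast.mpr (by omega)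
  have hlogk : 1 < Real.log k := by
    calc (1 : ℝ) < Real.log 3 := log_three_gt_one
      _ ≤ Real.log k := Real.log_le_log (by norm_num) (by exact_mod_cast hk)
  have hloglogk : 0 ≤ Real.log (Real.log k) := Real.log_nonneg hlogk.le
  set ell : ℕ → ℝ := fun n => if (k : ℝ) * r ^ n ≤ 1 then 3 * (k : ℝ) ^ 2 * (r ^ n) ^ 2
    else (3 / 2) * (k : ℝ) * r ^ n with helldef
  -- fiberwise decomposition over degrees
  have hmaps : ∀ P ∈ Ps, P.natDegree ∈ Finset.Icc 1 N := fun P hP =>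
    Finset.mem_Icc.mpr ⟨(hPs P hP).2.1.natDegree_pos, (hPs P hP).2.2⟩
  have hLHS : ∑ P ∈ Ps, ell P.natDegree = ∑ n ∈ Finset.Icc 1 N,
      ((Ps.filter (fun P => P.natDegree = n)).card : ℝ) * ell n := by
    rw [← Finset.sum_fiberwise_of_maps_to hmaps (fun P => ell P.natDegree)]
    refine Finset.sum_congr rfl fun n hn => ?_
    rw [Finset.sum_congr rfl (fun P hP => by rw [(Finset.mem_filter.mp hP).2]),
      Finset.sum_const, nsmul_eq_mul]
  show ∑ P ∈ Ps, ell P.natDegree ≤ _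
  rw [hLHS]
  -- split into large (k r^n ≤ 1) and small degrees
  rw [← Finset.sum_filter_add_sum_filter_not (Finset.Icc 1 N)
    (fun n => (k : ℝ) * r ^ n ≤ 1)
    (fun n => ((Ps.filter (fun P => P.natDegree = n)).card : ℝ) * ell n)]
  -- count bound per degree
  have hcount : ∀ n ∈ Finset.Icc 1 N,
      (n : ℝ) * ((Ps.filter (fun P => P.natDegree = n)).card : ℝ) ≤ (q : ℝ) ^ n := by
    intro n hn
    obtain ⟨hn1, _⟩ := Finset.mem_Icc.mp hn
    have := card_primes_le hn1 (Ps.filter (fun P => P.natDegree = n)) (fun P hP =>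
      ⟨(hPs P (Finset.mem_filter.mp hP).1).1, (hPs P (Finset.mem_filter.mp hP).1).2.1,
        (Finset.mem_filter.mp hP).2⟩)
    exact_mod_cast this
  have hrqn : ∀ n : ℕ, (q : ℝ) ^ n * r ^ n = 1 := fun n => by rw [← mul_pow, hqr, one_pow]
  -- LARGE part
  have hlarge : ∑ n ∈ (Finset.Icc 1 N).filter (fun n => (k : ℝ) * r ^ n ≤ 1),
      ((Ps.filter (fun P => P.natDegree = n)).card : ℝ) * ell n ≤ (9 / 2) * (k : ℝ) := by
    set B := (Finset.Icc 1 N).filter (fun n => (k : ℝ) * r ^ n ≤ 1) with hB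
    have hterm : ∀ n ∈ B, ((Ps.filter (fun P => P.natDegree = n)).card : ℝ) * ell n
        ≤ 3 * (k : ℝ) ^ 2 * r ^ n := by
      intro n hn
      have hnIcc := (Finset.mem_filter.mp hn).1
      have hc := (Finset.mem_filter.mp hn).2
      obtain ⟨hn1, _⟩ := Finset.mem_Icc.mp hnIcc
      have hcnt := hcount n hnIcc
      have hn0 : (1 : ℝ) ≤ (n : ℝ) := Nat.one_le_cast.mpr hn1
      have hcnt' : ((Ps.filter (fun P => P.natDegree = n)).card : ℝ) ≤ (q : ℝ) ^ n := by
        nlinarith [(Nat.cast_nonneg (Ps.filter (fun P => P.natDegree = n)).card : (0:ℝ) ≤ _)]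
      have hell : ell n = 3 * (k : ℝ) ^ 2 * (r ^ n) ^ 2 := by
        rw [helldef]; simp only [if_pos hc]
      rw [hell]
      have h2 : (q : ℝ) ^ n * (3 * (k : ℝ) ^ 2 * (r ^ n) ^ 2)
          = 3 * (k : ℝ) ^ 2 * r ^ n * ((q : ℝ) ^ n * r ^ n) := by ring
      have h3 : (q : ℝ) ^ n * (3 * (k : ℝ) ^ 2 * (r ^ n) ^ 2) = 3 * (k : ℝ) ^ 2 * r ^ n := by
        rw [h2, hrqn n, mul_one]
      calc ((Ps.filter (fun P => P.natDegree = n)).card : ℝ) * (3 * (k : ℝ) ^ 2 * (r ^ n) ^ 2)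
          ≤ (q : ℝ) ^ n * (3 * (k : ℝ) ^ 2 * (r ^ n) ^ 2) :=
            mul_le_mul_of_nonneg_right hcnt' (by positivity)
        _ = 3 * (k : ℝ) ^ 2 * r ^ n := h3
    by_cases hBne : B.Nonempty
    · set n₁ := B.min' hBne with hn1def
      have hmem : n₁ ∈ B := B.min'_mem hBne
      have hkr : (k : ℝ) * r ^ n₁ ≤ 1 := (Finset.mem_filter.mp hmem).2
      have hsubset : B ⊆ Finset.Icc n₁ N := by
        intro n hn
        refine Finset.mem_Icc.mpr ⟨B.min'_le n hn, (Finset.mem_Icc.mp (Finset.mem_filter.mp hn).1).2⟩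
      calc ∑ n ∈ B, ((Ps.filter (fun P => P.natDegree = n)).card : ℝ) * ell n
          ≤ ∑ n ∈ B, 3 * (k : ℝ) ^ 2 * r ^ n := Finset.sum_le_sum hterm
        _ ≤ ∑ n ∈ Finset.Icc n₁ N, 3 * (k : ℝ) ^ 2 * r ^ n := by
            apply Finset.sum_le_sum_of_subset_of_nonneg hsubset
            intro n _ _; positivity
        _ = 3 * (k : ℝ) ^ 2 * ∑ n ∈ Finset.Icc n₁ N, r ^ n := by rw [Finset.mul_sum]
        _ ≤ 3 * (k : ℝ) ^ 2 * (r ^ n₁ * (3 / 2)) := by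
            apply mul_le_mul_of_nonneg_left (geom_Icc_le hr0 hr13 n₁ N) (by positivity)
        _ ≤ (9 / 2) * (k : ℝ) := by nlinarith [pow_pos hr0 n₁]
    · rw [Finset.not_nonempty_iff_eq_empty.mp hBne, Finset.sum_empty]
      positivity
  -- SMALL part
  have hsmall : ∑ n ∈ (Finset.Icc 1 N).filter (fun n => ¬ ((k : ℝ) * r ^ n ≤ 1)),
      ((Ps.filter (fun P => P.natDegree = n)).card : ℝ) * ell n
        ≤ (3 / 2) * (k : ℝ) * (1 + Real.log (Real.log k)) := by
    set A := (Finset.Icc 1 N).filter (fun n => ¬ ((k : ℝ) * r ^ n ≤ 1)) with hA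
    have hterm : ∀ n ∈ A, ((Ps.filter (fun P => P.natDegree = n)).card : ℝ) * ell n
        ≤ (3 / 2) * (k : ℝ) * (1 / (n : ℝ)) := by
      intro n hn
      have hnIcc := (Finset.mem_filter.mp hn).1
      have hc := (Finset.mem_filter.mp hn).2
      obtain ⟨hn1, _⟩ := Finset.mem_Icc.mp hnIcc
      have hcnt := hcount n hnIcc
      have hn0 : (1 : ℝ) ≤ (n : ℝ) := Nat.one_le_cast.mpr hn1
      have hell : ell n = (3 / 2) * (k : ℝ) * r ^ n := by
        rw [helldef]; simp only [if_neg hc]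
      rw [hell]
      -- card ≤ q^n / n ; card * (3/2) k r^n ≤ (3/2)k/n
      have hrn : (0 : ℝ) < r ^ n := pow_pos hr0 n
      have key : ((Ps.filter (fun P => P.natDegree = n)).card : ℝ) * r ^ n ≤ 1 / (n : ℝ) := by
        rw [div_eq_inv_mul, mul_one]
        have h1 : (n : ℝ) * (((Ps.filter (fun P => P.natDegree = n)).card : ℝ) * r ^ n)
            ≤ (q : ℝ) ^ n * r ^ n := by
          have := mul_le_mul_of_nonneg_right hcnt hrn.le
          nlinarith [this]
        rw [hrqn n] at h1
        have hn0' : (0 : ℝ) < (n : ℝ) := by linarith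
        rw [← mul_le_mul_iff_right₀ hn0']
        calc (n : ℝ) * (((Ps.filter (fun P => P.natDegree = n)).card : ℝ) * r ^ n) ≤ 1 := h1
          _ = (n:ℝ) * (n:ℝ)⁻¹ := by rw [mul_inv_cancel₀ (ne_of_gt hn0')]
          _ = (n : ℝ) * ((n:ℝ)⁻¹) := rfl
      nlinarith [key, hk1]
    -- n ∈ A implies n ≤ Nat.log 3 k
    set m := Nat.log 3 k with hm
    have hAle : ∀ n ∈ A, n ≤ m := by
      intro n hn
      have hc := (Finset.mem_filter.mp hn).2
      push_neg at hc
      -- 1 < k * r^n → q^n < k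
      have hqn_lt : (q : ℝ) ^ n < (k : ℝ) := by
        have hrn : (0 : ℝ) < r ^ n := pow_pos hr0 n
        have h1 : (q : ℝ) ^ n = 1 / r ^ n := by
          field_simp [hrdef]
          exact hrqn n
        rw [h1, div_lt_iff₀ hrn]
        nlinarith [hc]
      have hqn_lt' : q ^ n < k := by exact_mod_cast hqn_lt
      have h3n : 3 ^ n ≤ k := by
        have := Nat.pow_le_pow_left hq3 n
        omega
      exact (Nat.le_log_iff_pow_le (by norm_num) (by omega)).mpr h3n
    have hAsub : A ⊆ Finset.Icc 1 m := by
      intro n hn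
      exact Finset.mem_Icc.mpr ⟨(Finset.mem_Icc.mp (Finset.mem_filter.mp hn).1).1, hAle n hn⟩
    have hharm : ∑ n ∈ A, (1 / (n : ℝ)) ≤ 1 + Real.log (Real.log k) := by
      by_cases hAne : A.Nonempty
      · have hm1 : 1 ≤ m := by
          obtain ⟨n, hn⟩ := hAne
          have := hAle n hn
          have := (Finset.mem_Icc.mp (Finset.mem_filter.mp hn).1).1
          omega
        have h1 : ∑ n ∈ A, (1 / (n : ℝ)) ≤ ∑ n ∈ Finset.Icc 1 m, (1 / (n : ℝ)) := by
          apply Finset.sum_le_sum_of_subset_of_nonneg hAsub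
          intro n _ _; positivity
        have h2 : ∑ n ∈ Finset.Icc 1 m, (1 / (n : ℝ)) = (harmonic m : ℝ) := by
          rw [harmonic]
          push_cast
          rw [← Finset.Ico_add_one_right_eq_Icc, Finset.sum_Ico_eq_sum_range]
          refine Finset.sum_congr (by norm_num) fun i _ => ?_
          push_cast
          rw [one_div, add_comm]
        have h3 : (harmonic m : ℝ) ≤ 1 + Real.log m := harmonic_le_one_add_log m
        -- m ≤ log k
        have hmk : (m : ℝ) ≤ Real.log k := by
          have h4 : (3 : ℕ) ^ m ≤ k := Nat.pow_log_le_self 3 (by omega)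
          have h5 : (m : ℝ) * Real.log 3 ≤ Real.log k := by
            rw [← Real.log_pow]
            apply Real.log_le_log (by positivity)
            exact_mod_cast h4
          nlinarith [log_three_gt_one, (Nat.cast_nonneg m : (0:ℝ) ≤ _)]
        have h6 : Real.log m ≤ Real.log (Real.log k) :=
          Real.log_le_log (by exact_mod_cast hm1) hmk
        linarith
      · rw [Finset.not_nonempty_iff_eq_empty.mp hAne, Finset.sum_empty]
        positivity
    calc ∑ n ∈ A, ((Ps.filter (fun P => P.natDegree = n)).card : ℝ) * ell n
        ≤ ∑ n ∈ A, (3 / 2) * (k : ℝ) * (1 / (n : ℝ)) := Finset.sum_le_sum hterm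
      _ = (3 / 2) * (k : ℝ) * ∑ n ∈ A, (1 / (n : ℝ)) := by rw [Finset.mul_sum]
      _ ≤ (3 / 2) * (k : ℝ) * (1 + Real.log (Real.log k)) := by
          apply mul_le_mul_of_nonneg_left hharm (by positivity)
  linarith [hlarge, hsmall]

/-- Multiplicity of a factor is at most the degree. -/
lemma count_le_natDegree {g : Polynomial F} (hg : g.Monic) (P : Polynomial F) :
    (normalizedFactors g).count P ≤ g.natDegree := by
  by_cases hP : P ∈ normalizedFactors g
  · have h := natDegree_eq_sum_nf hg (normalizedFactors g).toFinset (fun Q hQ =>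
      Multiset.mem_toFinset.mpr hQ)
    have hdeg1 : 1 ≤ P.natDegree := (irreducible_of_normalized_factor P hP).natDegree_pos
    have hsingle : (normalizedFactors g).count P * P.natDegree
        ≤ ∑ Q ∈ (normalizedFactors g).toFinset, (normalizedFactors g).count Q * Q.natDegree := by
      apply Finset.single_le_sum (f := fun Q => (normalizedFactors g).count Q * Q.natDegree)
        (fun Q _ => Nat.zero_le _) (Multiset.mem_toFinset.mpr hP)
    calc (normalizedFactors g).count P ≤ (normalizedFactors g).count P * P.natDegree :=
          Nat.le_mul_of_pos_right _ hdeg1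
      _ ≤ _ := hsingle
      _ = g.natDegree := h.symm
  · rw [Multiset.count_eq_zero_of_notMem hP]; exact Nat.zero_le _

lemma main_sum_bound (hodd : Odd (Fintype.card F)) (k : ℕ) (hk : 3 ≤ k)
    (S : Finset (Polynomial F)) (hS : ∀ f ∈ S, f.Monic) :
    ∑ f ∈ S, (dk F k (f ^ 2) : ℝ) * ((Fintype.card F : ℝ))⁻¹ ^ (2 * f.natDegree)
      ≤ Real.exp (6 * (k : ℝ) + (3 / 2) * (k : ℝ) * Real.log (Real.log k)) := by
  classical
  have hq3 : 3 ≤ Fintype.card F := three_le_card hodd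
  set r : ℝ := ((Fintype.card F : ℝ))⁻¹ with hrdef
  have hq0 : (0 : ℝ) < (Fintype.card F : ℝ) := by positivity
  have hr0 : 0 < r := by positivity
  have hr13 : r ≤ 1 / 3 := by
    rw [hrdef, inv_le_comm₀ hq0 (by norm_num)]
    norm_num
    exact_mod_cast hq3
  set N : ℕ := max 1 (S.sup Polynomial.natDegree) with hN
  have hN1 : 1 ≤ N := le_max_left _ _
  have hdegS : ∀ f ∈ S, f.natDegree ≤ N := fun f hf =>
    le_max_of_le_right (Finset.le_sup hf)
  set M : ℕ := 2 * N with hM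
  have hM2 : 2 ≤ M := by omega
  set D : Finset (Polynomial F) := (finite_deg_le M).toFinset with hD
  set Ps : Finset (Polynomial F) :=
    ((finite_deg_le N).toFinset.filter fun p => p.Monic ∧ Irreducible p) with hPs
  have hPs_prop : ∀ P ∈ Ps, P.Monic ∧ Irreducible P ∧ P.natDegree ≤ N := by
    intro P hP
    obtain ⟨h1, h2, h3⟩ := Finset.mem_filter.mp hP
    exact ⟨h2, h3, by simpa using (Set.Finite.mem_toFinset _).mp h1⟩
  set 𝒯 : Finset (Fin k → Polynomial F) :=
    (Fintype.piFinset fun _ : Fin k => D).filter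
      (fun t => (∀ i, (t i).Monic) ∧ ∃ f ∈ S, ∏ i, t i = f ^ 2) with h𝒯
  -- basic facts about tuples in 𝒯
  have h𝒯monic : ∀ t ∈ 𝒯, ∀ i, (t i).Monic := fun t ht =>
    (Finset.mem_filter.mp ht).2.1
  have hfac : ∀ t ∈ 𝒯, ∀ i, ∀ P ∈ normalizedFactors (t i), P ∈ Ps := by
    intro t ht i P hP
    obtain ⟨f, hf, hprod⟩ := (Finset.mem_filter.mp ht).2.2
    have hmonic := h𝒯monic t ht
    have hPprime : Prime P := prime_of_normalized_factor P hP
    have hPdvd : P ∣ f ^ 2 := by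
      have h1 : P ∣ t i := dvd_of_mem_normalizedFactors hP
      have h2 : t i ∣ ∏ j, t j := Finset.dvd_prod_of_mem t (Finset.mem_univ i)
      rw [hprod] at h2
      exact h1.trans h2
    have hPdvdf : P ∣ f := hPprime.dvd_of_dvd_pow hPdvd
    have hfne : f ≠ 0 := (hS f hf).ne_zero
    have hdeg : P.natDegree ≤ N := le_trans (natDegree_le_of_dvd hPdvdf hfne) (hdegS f hf)
    refine Finset.mem_filter.mpr ⟨(Set.Finite.mem_toFinset _).mpr hdeg,
      monic_of_mem_nf hP, hPprime.irreducible⟩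
  -- the exponent-matrix map
  set E : (Fin k → Polynomial F) → ({P // P ∈ Ps} → Fin k → ℕ) :=
    fun t P i => (normalizedFactors (t i)).count ↑P with hE
  -- degrees in terms of the matrix
  have hdeg_eq : ∀ t ∈ 𝒯, ∀ i : Fin k,
      (t i).natDegree = ∑ P : {P // P ∈ Ps}, E t P i * (↑P : Polynomial F).natDegree := by
    intro t ht i
    rw [natDegree_eq_sum_nf (h𝒯monic t ht i) Ps (hfac t ht i)]
    rw [Finset.univ_eq_attach, Finset.sum_attach Ps
      (fun P => (normalizedFactors (t i)).count P * P.natDegree)]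
  -- the weight identity
  have hweight : ∀ t ∈ 𝒯, r ^ (∑ i, (t i).natDegree)
      = ∏ P : {P // P ∈ Ps},
          (r ^ (↑P : Polynomial F).natDegree) ^ (∑ i, E t P i) := by
    intro t ht
    have h1 : ∑ i, (t i).natDegree
        = ∑ P : {P // P ∈ Ps}, (↑P : Polynomial F).natDegree * (∑ i, E t P i) := by
      rw [Finset.sum_congr rfl (fun i _ => hdeg_eq t ht i), Finset.sum_comm]
      refine Finset.sum_congr rfl fun P _ => ?_
      rw [Finset.mul_sum]
      exact Finset.sum_congr rfl fun i _ => by ring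
    rw [h1, ← Finset.prod_pow_eq_pow_sum]
    exact Finset.prod_congr rfl fun P _ => by rw [pow_mul]
  -- the target space of matrices
  set V : Finset (Fin k → ℕ) := (Fintype.piFinset fun _ : Fin k => Finset.range (M + 1)).filter
      (fun v => Even (∑ i, v i)) with hV
  -- the matrix of a tuple lands in the matrix space
  have hmapsto : ∀ t ∈ 𝒯, ∀ P : {P // P ∈ Ps}, E t P ∈ V := by
    intro t ht P
    obtain ⟨f, hf, hprod⟩ := (Finset.mem_filter.mp ht).2.2
    refine Finset.mem_filter.mpr ⟨?_, ?_⟩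
    · refine Fintype.mem_piFinset.mpr fun i => ?_
      refine Finset.mem_range.mpr ?_
      have h1 : (normalizedFactors (t i)).count ↑P ≤ (t i).natDegree :=
        count_le_natDegree (h𝒯monic t ht i) _
      have h2 : t i ∈ D := Fintype.mem_piFinset.mp (Finset.mem_filter.mp ht).1 i
      have h3 : (t i).natDegree ≤ M := by
        have := (Set.Finite.mem_toFinset _).mp h2
        simpa using this
      have h4 : E t P i = (normalizedFactors (t i)).count ↑P := rfl
      omega
    · -- even column sums
      have htne : ∀ i ∈ Finset.univ, t i ≠ (0 : Polynomial F) :=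
        fun i _ => (h𝒯monic t ht i).ne_zero
      have h1 : ∑ i, E t P i = Multiset.count (↑P) (normalizedFactors (∏ i, t i)) := by
        rw [nf_prod_eq Finset.univ t htne, Multiset.count_sum']
      rw [h1, hprod]
      have h2 : normalizedFactors (f ^ 2) = 2 • normalizedFactors f := normalizedFactors_pow 2
      rw [h2, Multiset.count_nsmul]
      exact even_two_mul _
  -- injectivity of the matrix map on 𝒯
  have hinj : ∀ t ∈ 𝒯, ∀ t' ∈ 𝒯, E t = E t' → t = t' := by
    intro t ht t' ht' h
    funext i
    rw [eq_prod_pow_nf (h𝒯monic t ht i) Ps (hfac t ht i),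
      eq_prod_pow_nf (h𝒯monic t' ht' i) Ps (hfac t' ht' i)]
    refine Finset.prod_congr rfl fun P hP => ?_
    have := congrFun (congrFun h ⟨P, hP⟩) i
    simp only [hE] at this
    rw [this]
  -- dk as a card
  have hdk : ∀ f ∈ S, (dk F k (f ^ 2) : ℕ)
      = (𝒯.filter fun t => ∏ i, t i = f ^ 2).card := by
    intro f hf
    have hf2ne : f ^ 2 ≠ 0 := pow_ne_zero 2 (hS f hf).ne_zero
    have hiff : ∀ t : Fin k → Polynomial F,
        ((∀ i, (t i).Monic) ∧ ∏ i, t i = f ^ 2)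
          ↔ t ∈ 𝒯.filter fun t => ∏ i, t i = f ^ 2 := by
      intro t
      constructor
      · rintro ⟨hmon, hprod⟩
        refine Finset.mem_filter.mpr ⟨Finset.mem_filter.mpr ⟨?_, hmon, ⟨f, hf, hprod⟩⟩, hprod⟩
        refine Fintype.mem_piFinset.mpr fun i => ?_
        have hdvd : t i ∣ f ^ 2 := by
          rw [← hprod]; exact Finset.dvd_prod_of_mem t (Finset.mem_univ i)
        have : (t i).natDegree ≤ (f ^ 2).natDegree := natDegree_le_of_dvd hdvd hf2ne
        rw [natDegree_pow] at this
        have hfN := hdegS f hf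
        refine (Set.Finite.mem_toFinset _).mpr ?_
        simp only [Set.mem_setOf_eq]
        omega
      · intro ht
        exact ⟨(Finset.mem_filter.mp (Finset.mem_filter.mp ht).1).2.1,
          (Finset.mem_filter.mp ht).2⟩
    simp only [dk]
    rw [Nat.card_congr (Equiv.subtypeEquivRight hiff)]
    exact Nat.card_eq_finsetCard _
  -- partition of 𝒯 according to f
  have hpart : 𝒯 = S.biUnion (fun f => 𝒯.filter fun t => ∏ i, t i = f ^ 2) := by
    ext t
    constructor
    · intro ht
      obtain ⟨f, hf, hprod⟩ := (Finset.mem_filter.mp ht).2.2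
      exact Finset.mem_biUnion.mpr ⟨f, hf, Finset.mem_filter.mpr ⟨ht, hprod⟩⟩
    · intro ht
      obtain ⟨f, _, h⟩ := Finset.mem_biUnion.mp ht
      exact (Finset.mem_filter.mp h).1
  have hdisj : (↑S : Set (Polynomial F)).PairwiseDisjoint
      (fun f => 𝒯.filter fun t => ∏ i, t i = f ^ 2) := by
    intro f hf g hg hfg
    refine Finset.disjoint_left.mpr fun t ht ht' => ?_
    exact hfg (monic_sq_inj (hS f hf) (hS g hg)
      (((Finset.mem_filter.mp ht).2).symm.trans (Finset.mem_filter.mp ht').2))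
  -- Step 1 : sum over S = sum over tuples
  have step1 : ∑ f ∈ S, (dk F k (f ^ 2) : ℝ) * r ^ (2 * f.natDegree)
      = ∑ t ∈ 𝒯, r ^ (∑ i, (t i).natDegree) := by
    conv_rhs => rw [hpart]
    rw [Finset.sum_biUnion hdisj]
    refine Finset.sum_congr rfl fun f hf => ?_
    have hconst : ∀ t ∈ 𝒯.filter (fun t => ∏ i, t i = f ^ 2),
        r ^ (∑ i, (t i).natDegree) = r ^ (2 * f.natDegree) := by
      intro t ht
      have hmon : ∀ i, (t i).Monic := h𝒯monic t (Finset.mem_filter.mp ht).1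
      have hprod : ∏ i, t i = f ^ 2 := (Finset.mem_filter.mp ht).2
      have hsum : ∑ i, (t i).natDegree = 2 * f.natDegree := by
        have h1 := natDegree_prod_of_monic Finset.univ t (fun i _ => hmon i)
        rw [hprod, natDegree_pow] at h1
        omega
      rw [hsum]
    rw [Finset.sum_congr rfl hconst, Finset.sum_const, hdk f hf, nsmul_eq_mul]
  -- Step 2 : injection into matrices
  have step2 : ∑ t ∈ 𝒯, r ^ (∑ i, (t i).natDegree)
      ≤ ∑ EE ∈ Fintype.piFinset (fun _ : {P // P ∈ Ps} => V),
          ∏ P : {P // P ∈ Ps}, (r ^ (↑P : Polynomial F).natDegree) ^ (∑ i, EE P i) := by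
    rw [Finset.sum_congr rfl hweight]
    rw [← Finset.sum_image (g := E)
      (f := fun EE => ∏ P : {P // P ∈ Ps},
        (r ^ (↑P : Polynomial F).natDegree) ^ (∑ i, EE P i)) hinj]
    apply Finset.sum_le_sum_of_subset_of_nonneg
    · intro EE hEE
      obtain ⟨t, ht, rfl⟩ := Finset.mem_image.mp hEE
      exact Fintype.mem_piFinset.mpr fun P => hmapsto t ht P
    · intro EE _ _
      positivity
  -- Step 3 : factor the matrix sum
  have step3 : ∑ EE ∈ Fintype.piFinset (fun _ : {P // P ∈ Ps} => V),
        ∏ P : {P // P ∈ Ps}, (r ^ (↑P : Polynomial F).natDegree) ^ (∑ i, EE P i)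
      = ∏ P : {P // P ∈ Ps}, ∑ v ∈ V, (r ^ (↑P : Polynomial F).natDegree) ^ (∑ i, v i) :=
    (Finset.prod_univ_sum (fun _ : {P // P ∈ Ps} => V)
      (fun P v => (r ^ (↑P : Polynomial F).natDegree) ^ (∑ i, v i))).symm
  -- Step 4 : per-prime bound
  have step4 : ∏ P : {P // P ∈ Ps}, ∑ v ∈ V, (r ^ (↑P : Polynomial F).natDegree) ^ (∑ i, v i)
      ≤ ∏ P : {P // P ∈ Ps}, Real.exp
        (if (k : ℝ) * r ^ (↑P : Polynomial F).natDegree ≤ 1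
          then 3 * (k : ℝ) ^ 2 * (r ^ (↑P : Polynomial F).natDegree) ^ 2
          else (3 / 2) * (k : ℝ) * r ^ (↑P : Polynomial F).natDegree) := by
    apply Finset.prod_le_prod
    · intro P _
      apply Finset.sum_nonneg
      intro v _
      positivity
    · intro P _
      have hdeg1 : 1 ≤ (↑P : Polynomial F).natDegree := (hPs_prop _ P.2).2.1.natDegree_pos
      have hu0 : 0 < r ^ (↑P : Polynomial F).natDegree := pow_pos hr0 _
      have hu13 : r ^ (↑P : Polynomial F).natDegree ≤ 1 / 3 := by
        calc r ^ (↑P : Polynomial F).natDegree ≤ r ^ 1 :=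
              pow_le_pow_of_le_one hr0.le (by linarith) hdeg1
          _ = r := pow_one r
          _ ≤ 1 / 3 := hr13
      exact local_bound k M hk hM2 hu0 hu13
  -- Step 5 : collapse the product of exponentials
  have step5 : ∏ P : {P // P ∈ Ps}, Real.exp
        (if (k : ℝ) * r ^ (↑P : Polynomial F).natDegree ≤ 1
          then 3 * (k : ℝ) ^ 2 * (r ^ (↑P : Polynomial F).natDegree) ^ 2
          else (3 / 2) * (k : ℝ) * r ^ (↑P : Polynomial F).natDegree)
      ≤ Real.exp (6 * (k : ℝ) + (3 / 2) * (k : ℝ) * Real.log (Real.log k)) := by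
    rw [← Real.exp_sum]
    apply Real.exp_le_exp.mpr
    have hsum : ∑ P : {P // P ∈ Ps},
        (if (k : ℝ) * r ^ (↑P : Polynomial F).natDegree ≤ 1
          then 3 * (k : ℝ) ^ 2 * (r ^ (↑P : Polynomial F).natDegree) ^ 2
          else (3 / 2) * (k : ℝ) * r ^ (↑P : Polynomial F).natDegree)
        = ∑ P ∈ Ps, (if (k : ℝ) * r ^ P.natDegree ≤ 1
          then 3 * (k : ℝ) ^ 2 * (r ^ P.natDegree) ^ 2
          else (3 / 2) * (k : ℝ) * r ^ P.natDegree) := by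
      rw [Finset.univ_eq_attach]
      exact Finset.sum_attach Ps (fun P => if (k : ℝ) * r ^ P.natDegree ≤ 1
        then 3 * (k : ℝ) ^ 2 * (r ^ P.natDegree) ^ 2
        else (3 / 2) * (k : ℝ) * r ^ P.natDegree)
    rw [hsum]
    exact ell_sum_bound hodd k N hk Ps hPs_prop
  calc ∑ f ∈ S, (dk F k (f ^ 2) : ℝ) * r ^ (2 * f.natDegree)
      = ∑ t ∈ 𝒯, r ^ (∑ i, (t i).natDegree) := step1
    _ ≤ _ := step2
    _ = _ := step3
    _ ≤ _ := step4
    _ ≤ _ := step5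

end AkAux

end AkAuxSection

/-- bound `a_k ≤ c^{k ln ln k}`. -/
theorem ak_bound (F : Type) [Field F] [Fintype F] (hq : Odd (Fintype.card F)) :
    ∃ c > (1 : ℝ), ∀ k : ℕ, 3 ≤ k →
      (∑' f : {f : Polynomial F // f.Monic}, (dk F k (f.1 ^ 2) : ℝ) / (pnorm F f.1) ^ 2)
        ≤ c ^ ((k : ℝ) * Real.log (Real.log (k : ℝ))) := by
  classical
  refine ⟨Real.exp 200, by
    rw [← Real.exp_zero]
    exact Real.exp_lt_exp.mpr (by norm_num), ?_⟩
  intro k hk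
  have hk1 : (1 : ℝ) ≤ (k : ℝ) := Nat.one_le_cast.mpr (by omega)
  -- lower bound on log log k
  have hexp116 : Real.exp (1 / 16 : ℝ) ≤ 16 / 15 := by
    have h1 := Real.add_one_le_exp (-(1 / 16 : ℝ))
    have h2 : (0 : ℝ) < Real.exp (1 / 16) := Real.exp_pos _
    have h3 : Real.exp (-(1 / 16 : ℝ)) = (Real.exp (1 / 16))⁻¹ := Real.exp_neg _
    rw [h3] at h1
    have h4 : (15 / 16 : ℝ) ≤ (Real.exp (1 / 16))⁻¹ := by linarith
    have h5 : Real.exp (1 / 16) * (15 / 16 : ℝ) ≤ 1 := by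
      have := mul_le_mul_of_nonneg_left h4 h2.le
      rwa [mul_inv_cancel₀ (ne_of_gt h2)] at this
    nlinarith
  have hlog3 : (17 / 16 : ℝ) ≤ Real.log 3 := by
    rw [Real.le_log_iff_exp_le (by norm_num : (0 : ℝ) < 3)]
    have : Real.exp (17 / 16 : ℝ) = Real.exp 1 * Real.exp (1 / 16) := by
      rw [← Real.exp_add]; norm_num
    rw [this]
    calc Real.exp 1 * Real.exp (1 / 16) ≤ 2.7182818286 * (16 / 15) := by
          apply mul_le_mul Real.exp_one_lt_d9.le hexp116 (Real.exp_pos _).le (by norm_num)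
      _ ≤ 3 := by norm_num
  have hL17 : (1 / 17 : ℝ) ≤ Real.log (Real.log k) := by
    have hlogk : (17 / 16 : ℝ) ≤ Real.log k :=
      le_trans hlog3 (Real.log_le_log (by norm_num) (by exact_mod_cast hk))
    have h1 : Real.log (17 / 16 : ℝ) ≤ Real.log (Real.log k) :=
      Real.log_le_log (by norm_num) hlogk
    have h2 : (1 / 17 : ℝ) ≤ Real.log (17 / 16 : ℝ) := by
      have h3 := Real.log_le_sub_one_of_pos (show (0 : ℝ) < 16 / 17 by norm_num)
      have h4 : Real.log (17 / 16 : ℝ) = -Real.log (16 / 17 : ℝ) := by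
        rw [← Real.log_inv]
        norm_num
      rw [h4]
      linarith
    linarith
  have hRHS : Real.exp (6 * (k : ℝ) + (3 / 2) * (k : ℝ) * Real.log (Real.log k))
      ≤ Real.exp 200 ^ ((k : ℝ) * Real.log (Real.log (k : ℝ))) := by
    rw [Real.rpow_def_of_pos (Real.exp_pos _), Real.log_exp]
    apply Real.exp_le_exp.mpr
    nlinarith [hL17, hk1, mul_le_mul_of_nonneg_left hL17 (by linarith : (0:ℝ) ≤ (k:ℝ))]
  by_cases hsum : Summable (fun f : {f : Polynomial F // f.Monic} =>
      (dk F k (f.1 ^ 2) : ℝ) / (pnorm F f.1) ^ 2)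
  · refine le_trans (Summable.tsum_le_of_sum_le hsum ?_) hRHS
    intro s
    have himg : ∀ f ∈ s.image (fun f : {f : Polynomial F // f.Monic} => f.1), f.Monic := by
      intro f hf
      obtain ⟨g, _, rfl⟩ := Finset.mem_image.mp hf
      exact g.2
    have hmain := AkAux.main_sum_bound (F := F) hq k hk
      (s.image (fun f : {f : Polynomial F // f.Monic} => f.1)) himg
    have hterm : ∀ f : {f : Polynomial F // f.Monic},
        (dk F k (f.1 ^ 2) : ℝ) / (pnorm F f.1) ^ 2
          = (dk F k (f.1 ^ 2) : ℝ) * ((Fintype.card F : ℝ))⁻¹ ^ (2 * f.1.natDegree) := by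
      intro f
      have hq0 : (0 : ℝ) < (Fintype.card F : ℝ) := by
        have : 0 < Fintype.card F := Fintype.card_pos
        exact_mod_cast this
      rw [pnorm, div_eq_mul_inv]
      congr 1
      rw [← pow_mul, mul_comm, ← inv_pow]
    have hsumeq : ∑ f ∈ s, (dk F k (f.1 ^ 2) : ℝ) / (pnorm F f.1) ^ 2
        = ∑ f ∈ s.image (fun f : {f : Polynomial F // f.Monic} => f.1),
            (dk F k (f ^ 2) : ℝ) * ((Fintype.card F : ℝ))⁻¹ ^ (2 * f.natDegree) := by
      rw [Finset.sum_image (fun x _ y _ h => Subtype.ext h)]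
      exact Finset.sum_congr rfl fun f _ => hterm f
    rw [hsumeq]
    exact hmain
  · rw [tsum_eq_zero_of_not_summable hsum]
    exact (Real.rpow_pos_of_pos (Real.exp_pos _) _).le

end
end
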